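/- Let $(\eta_\ell)$ be a sequence of nonnegative reals satisfying $\sum_{k=\ell}^{\ell+N}\eta_k^2 \le D(N)\eta_\ell^2$ for all $\ell,N$. Then for all $k,\ell\in\mathbb{N}$ there holds $\eta_{\ell+k}^2 \le \left(\prod_{j=1}^k (1 - D(j)^{-1})\right) \sum_{j=\ell}^{\ell+k} \eta_j^2$, where the empty product equals $1$. -/

import Mathlib

open Finset

/-- induction step in Lemma `lem:Nsum`: from the summed estimator
bound one obtains the product bound, where the empty product (`k = 0`) equals `1`. -/
theorem stmt_1 (η : ℕ → ℝ) (hη : ∀ ℓ, 0 ≤ η ℓ)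
    (D : ℕ → ℝ) (hD : ∀ N, 1 < D N)
    (hsum : ∀ ℓ N : ℕ, ∑ k ∈ Finset.Icc ℓ (ℓ + N), (η k) ^ 2 ≤ D N * (η ℓ) ^ 2) :
    ∀ k ℓ : ℕ, (η (ℓ + k)) ^ 2 ≤
      (∏ j ∈ Finset.Icc 1 k, (1 - (D j)⁻¹)) * ∑ j ∈ Finset.Icc ℓ (ℓ + k), (η j) ^ 2 := by
  intro k
  induction k with
  | zero => intro ℓ; simp
  | succ k ih =>
    intro ℓ
    have hDk : 0 < D (k + 1) := lt_trans one_pos (hD (k + 1))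
    have hfac : 0 ≤ 1 - (D (k + 1))⁻¹ := by
      have : (D (k + 1))⁻¹ < 1 := inv_lt_one_of_one_lt₀ (hD (k + 1))
      linarith
    have hP : 0 ≤ ∏ j ∈ Finset.Icc 1 k, (1 - (D j)⁻¹) := by
      refine Finset.prod_nonneg fun j _ => ?_
      have : (D j)⁻¹ < 1 := inv_lt_one_of_one_lt₀ (hD j)
      linarith
    set S := ∑ j ∈ Finset.Icc ℓ (ℓ + (k + 1)), (η j) ^ 2 with hSdef
    have hsplit : S = (η ℓ) ^ 2 + ∑ j ∈ Finset.Icc (ℓ + 1) (ℓ + 1 + k), (η j) ^ 2 := by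
      rw [hSdef]
      have h1 : ℓ + (k + 1) = ℓ + 1 + k := by ring
      rw [h1, Finset.Icc_eq_cons_Ioc (by omega), Finset.sum_cons, Finset.Icc_add_one_left_eq_Ioc]
    have hS : S ≤ D (k + 1) * (η ℓ) ^ 2 := hsum ℓ (k + 1)
    have hηℓ : (D (k + 1))⁻¹ * S ≤ (η ℓ) ^ 2 := by
      rw [inv_mul_le_iff₀ hDk]; linarith [hS, mul_comm (D (k+1)) ((η ℓ)^2)]
    have htail : ∑ j ∈ Finset.Icc (ℓ + 1) (ℓ + 1 + k), (η j) ^ 2 ≤ (1 - (D (k + 1))⁻¹) * S := by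
      have : ∑ j ∈ Finset.Icc (ℓ + 1) (ℓ + 1 + k), (η j) ^ 2 = S - (η ℓ) ^ 2 := by
        rw [hsplit]; ring
      rw [this]; nlinarith
    have h1 := ih (ℓ + 1)
    have hmul : (∏ j ∈ Finset.Icc 1 k, (1 - (D j)⁻¹)) *
        ∑ j ∈ Finset.Icc (ℓ + 1) (ℓ + 1 + k), (η j) ^ 2 ≤
        (∏ j ∈ Finset.Icc 1 k, (1 - (D j)⁻¹)) * ((1 - (D (k + 1))⁻¹) * S) :=
      mul_le_mul_of_nonneg_left htail hP
    have hprod : ∏ j ∈ Finset.Icc 1 (k + 1), (1 - (D j)⁻¹) =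
        (∏ j ∈ Finset.Icc 1 k, (1 - (D j)⁻¹)) * (1 - (D (k + 1))⁻¹) := by
      rw [Finset.prod_Icc_succ_top (Nat.succ_le_succ (Nat.zero_le k))]
    have heq : ℓ + (k + 1) = ℓ + 1 + k := by ring
    rw [heq, hprod]
    calc (η (ℓ + 1 + k)) ^ 2 ≤ _ := h1
      _ ≤ _ := hmul
      _ = (∏ j ∈ Finset.Icc 1 k, (1 - (D j)⁻¹)) * (1 - (D (k + 1))⁻¹) * S := by ring
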